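/- Let A be a fixed d×p matrix with A^T A ≠ 0, and let X_1,...,X_k be n_i×p matrices such that each X_i^T X_i is positive definite. Then tr[(sum_i X_i^T X_i)^{-1} A^T A] · sum_{i=1}^k 1/tr[(X_i^T X_i)^{-1} A^T A] ≤ 1. -/

import Mathlib

open Matrix

section Aux

variable {p d : ℕ}

open scoped MatrixOrder

/-- trace of `Mᵀ * N` as a sum over entries. -/
lemma trace_tmul (M N : Matrix (Fin p) (Fin d) ℝ) :
    (Mᵀ * N).trace = ∑ x : Fin p × Fin d, M x.1 x.2 * N x.1 x.2 := by
  rw [Fintype.sum_prod_type]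
  simp only [Matrix.trace, Matrix.diag, Matrix.mul_apply, Matrix.transpose_apply]
  rw [Finset.sum_comm]


/-- Cauchy–Schwarz: `tr(MᵀN)² ≤ tr(MᵀM) tr(NᵀN)`. -/
lemma trace_cs (M N : Matrix (Fin p) (Fin d) ℝ) :
    (Mᵀ * N).trace ^ 2 ≤ (Mᵀ * M).trace * (Nᵀ * N).trace := by
  rw [trace_tmul, trace_tmul, trace_tmul]
  simpa [sq] using Finset.sum_mul_sq_le_sq_mul_sq Finset.univ
    (fun x : Fin p × Fin d => M x.1 x.2) (fun x => N x.1 x.2)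

lemma cs_key {S : Matrix (Fin p) (Fin p) ℝ} (hS : S.PosDef)
    (u C : Matrix (Fin p) (Fin d) ℝ) :
    (uᵀ * C).trace ^ 2 ≤ (uᵀ * S * u).trace * (Cᵀ * S⁻¹ * C).trace := by
  set R := CFC.sqrt S with hRdef
  have hRsymm : Rᵀ = R := by
    have := (CFC.sqrt_nonneg S).posSemidef.isHermitian
    simpa [Matrix.IsHermitian, Matrix.conjTranspose_eq_transpose_of_trivial] using this
  have hRR : R * R = S := CFC.sqrt_mul_sqrt_self S hS.posSemidef.nonneg
  have hRdet : IsUnit R.det := by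
    have hds : R.det * R.det = S.det := by rw [← det_mul, hRR]
    have hpos : 0 < R.det * R.det := hds ▸ hS.det_pos
    have : R.det ≠ 0 := fun h => by simp [h] at hpos
    exact this.isUnit
  have h1 : (R * u)ᵀ * (R⁻¹ * C) = uᵀ * C := by
    rw [transpose_mul, hRsymm, Matrix.mul_assoc, ← Matrix.mul_assoc R R⁻¹ C,
      mul_nonsing_inv _ hRdet, Matrix.one_mul]
  have h2 : (R * u)ᵀ * (R * u) = uᵀ * S * u := by
    rw [transpose_mul, hRsymm, Matrix.mul_assoc, ← Matrix.mul_assoc R R u, hRR,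
      ← Matrix.mul_assoc]
  have h3 : (R⁻¹ * C)ᵀ * (R⁻¹ * C) = Cᵀ * S⁻¹ * C := by
    rw [transpose_mul, transpose_nonsing_inv, hRsymm, Matrix.mul_assoc,
      ← Matrix.mul_assoc R⁻¹ R⁻¹ C, ← Matrix.mul_inv_rev, hRR, ← Matrix.mul_assoc]
  have := trace_cs (R * u) (R⁻¹ * C)
  rwa [h1, h2, h3] at this

lemma trace_pos_of_ne {P : Matrix (Fin p) (Fin p) ℝ} (hP : P.PosDef)
    {C : Matrix (Fin p) (Fin d) ℝ} (hC : C ≠ 0) :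
    0 < (Cᵀ * P * C).trace := by
  have hPsym : ∀ i j, P i j = P j i := fun i j => by
    simpa using (hP.isHermitian.apply i j).symm
  have key : (Cᵀ * P * C).trace
      = ∑ j : Fin d, (fun i => C i j) ⬝ᵥ (P *ᵥ fun i => C i j) := by
    simp only [Matrix.trace, Matrix.diag, Matrix.mul_apply, Matrix.transpose_apply,
      dotProduct, Matrix.mulVec, Finset.sum_mul, Finset.mul_sum]
    refine Finset.sum_congr rfl fun j _ => ?_
    rw [Finset.sum_comm]
    exact Finset.sum_congr rfl fun a _ => Finset.sum_congr rfl fun b _ => by ring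
  rw [key]
  obtain ⟨i0, j0, hij⟩ : ∃ i j, C i j ≠ 0 := by
    by_contra h
    push_neg at h
    exact hC (by ext i j; simp [h])
  have hnn : ∀ j, 0 ≤ (fun i => C i j) ⬝ᵥ (P *ᵥ fun i => C i j) := fun j => by
    have := hP.posSemidef.dotProduct_mulVec_nonneg (fun i => C i j)
    simpa using this
  have hpos : 0 < (fun i => C i j0) ⬝ᵥ (P *ᵥ fun i => C i j0) := by
    have hne : (fun i => C i j0) ≠ 0 := fun h => hij (by simpa using congrFun h i0)
    have := hP.dotProduct_mulVec_pos hne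
    simpa using this
  exact Finset.sum_pos' (fun j _ => hnn j) ⟨j0, Finset.mem_univ _, hpos⟩

end Aux

/-- The relative efficiency of distributed least squares is at most one:
`tr[(∑ XᵢᵀXᵢ)⁻¹ AᵀA] · ∑ 1/tr[(XᵢᵀXᵢ)⁻¹ AᵀA] ≤ 1`. -/
theorem relative_efficiency_le_one (p d k : ℕ) (n : Fin k → ℕ)
    (A : Matrix (Fin d) (Fin p) ℝ) (hA : Aᵀ * A ≠ 0)
    (X : ∀ i : Fin k, Matrix (Fin (n i)) (Fin p) ℝ)
    (hX : ∀ i, ((X i)ᵀ * X i).PosDef) :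
    (((∑ i, (X i)ᵀ * X i)⁻¹ * (Aᵀ * A)).trace) *
      (∑ i, ((((X i)ᵀ * X i)⁻¹ * (Aᵀ * A)).trace)⁻¹) ≤ 1 := by
  rcases Nat.eq_zero_or_pos k with hk | hk
  · subst hk; simp
  have hC : Aᵀ ≠ (0 : Matrix (Fin p) (Fin d) ℝ) := fun h => hA (by rw [h, Matrix.zero_mul])
  have tr_eq : ∀ (P : Matrix (Fin p) (Fin p) ℝ),
      (P * (Aᵀ * A)).trace = (A * P * Aᵀ).trace := by
    intro P
    rw [← Matrix.mul_assoc, Matrix.trace_mul_comm, ← Matrix.mul_assoc]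
  set S := ∑ i, (X i)ᵀ * X i with hSdef
  have hS : S.PosDef := by
    have i0 : Fin k := ⟨0, hk⟩
    have hsp : S = (X i0)ᵀ * X i0 + ∑ i ∈ Finset.univ.erase i0, (X i)ᵀ * X i := by
      rw [hSdef, ← Finset.add_sum_erase _ _ (Finset.mem_univ i0)]
    rw [hsp]
    refine (hX i0).add_posSemidef ?_
    refine Finset.sum_induction _ _ (fun a b ha hb => ha.add hb) ?_ ?_
    · exact Matrix.PosSemidef.zero
    · exact fun i _ => (hX i).posSemidef
  have hSdet : IsUnit S.det := hS.det_pos.ne'.isUnit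
  set u : Matrix (Fin p) (Fin d) ℝ := S⁻¹ * Aᵀ with hudef
  have hSinvT : (S⁻¹)ᵀ = S⁻¹ := by
    rw [transpose_nonsing_inv]
    congr 1
    have := hS.isHermitian
    simpa [Matrix.IsHermitian, Matrix.conjTranspose_eq_transpose_of_trivial] using this
  set T := ((S⁻¹ * (Aᵀ * A)).trace) with hTdef
  have hTC : T = (A * S⁻¹ * Aᵀ).trace := tr_eq _
  have hT : 0 < T := by
    have := trace_pos_of_ne hS.inv hC
    rw [transpose_transpose] at this
    rw [hTC]; exact this
  have huC : (uᵀ * Aᵀ).trace = T := by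
    rw [hudef, transpose_mul, hSinvT, transpose_transpose, hTC]
  have huSu : (uᵀ * S * u).trace = T := by
    have heq : uᵀ * S * u = A * S⁻¹ * Aᵀ := by
      rw [hudef, transpose_mul, hSinvT, transpose_transpose,
        Matrix.mul_assoc (A * S⁻¹) S, ← Matrix.mul_assoc S S⁻¹ Aᵀ,
        mul_nonsing_inv _ hSdet, Matrix.one_mul]
    rw [heq, hTC]
  have hsplit : (uᵀ * S * u).trace = ∑ i, (uᵀ * ((X i)ᵀ * X i) * u).trace := by
    rw [hSdef, Matrix.mul_sum, Matrix.sum_mul, trace_sum]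
  have hterm : ∀ i : Fin k,
      T ^ 2 * ((((X i)ᵀ * X i)⁻¹ * (Aᵀ * A)).trace)⁻¹
        ≤ (uᵀ * ((X i)ᵀ * X i) * u).trace := by
    intro i
    have hai : 0 < (((X i)ᵀ * X i)⁻¹ * (Aᵀ * A)).trace := by
      have := trace_pos_of_ne (hX i).inv hC
      rw [transpose_transpose] at this
      rw [tr_eq]; exact this
    have hcs := cs_key (hX i) u Aᵀ
    rw [huC, transpose_transpose, ← tr_eq] at hcs
    rw [← div_eq_mul_inv, div_le_iff₀ hai]
    exact hcs
  have hsum : T ^ 2 * (∑ i, ((((X i)ᵀ * X i)⁻¹ * (Aᵀ * A)).trace)⁻¹) ≤ T := by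
    calc T ^ 2 * (∑ i, ((((X i)ᵀ * X i)⁻¹ * (Aᵀ * A)).trace)⁻¹)
        = ∑ i, T ^ 2 * ((((X i)ᵀ * X i)⁻¹ * (Aᵀ * A)).trace)⁻¹ := Finset.mul_sum _ _ _
      _ ≤ ∑ i, (uᵀ * ((X i)ᵀ * X i) * u).trace := Finset.sum_le_sum fun i _ => hterm i
      _ = T := by rw [← hsplit, huSu]
  nlinarith [hsum, hT]
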